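/- For d odd with (d+1)/2 even, and n ≥ d+3, the stabilizer C_n^d of positive (d+1)×n matrices under column permutation is the group of order 2 generated by the order-reversing permutation i ↦ n+1−i. -/

import Mathlib

noncomputable section

/-- The `(d+1)×(d+1)` matrix whose `j`-th column is `(1, cols j)`. -/
def liftMat {d : ℕ} (cols : Fin (d + 1) → Fin d → ℝ) : Matrix (Fin (d + 1)) (Fin (d + 1)) ℝ :=
  Matrix.of fun i j => Fin.cases (motive := fun _ => ℝ) 1 (fun r => cols j r) i

/-- The `(d+1) × n` matrix with columns `(1, x i)` is positive: all maximal minors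
(columns taken in increasing order) are positive. -/
def PosMat {d n : ℕ} (x : Fin n → Fin d → ℝ) : Prop :=
  ∀ S : Fin (d + 1) → Fin n, StrictMono S → 0 < (liftMat fun k => x (S k)).det

/-- `F` is a face of `P`: the set of maximizers in `P` of some linear functional. -/
def IsFace {d : ℕ} (P F : Set (Fin d → ℝ)) : Prop :=
  ∃ f : (Fin d → ℝ) →ₗ[ℝ] ℝ, ∃ c : ℝ,
    (∀ y ∈ P, f y ≤ c) ∧ F = {y ∈ P | f y = c}

/-- `F` is a facet of the `d`-dimensional polytope `P`: a face of dimension `d − 1`. -/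
def IsFacet {d : ℕ} (P F : Set (Fin d → ℝ)) : Prop :=
  IsFace P F ∧ Module.finrank ℝ (vectorSpan ℝ F) = d - 1

open Matrix

lemma prod_pos_iff_even {α : Type*} (s : Finset α) (f : α → ℝ)
    (hf : ∀ i ∈ s, f i ≠ 0) :
    (0 < ∏ i ∈ s, f i) ↔ Even (s.filter fun i => f i < 0).card := by
  classical
  have habs : 0 < ∏ i ∈ s, |f i| :=
    Finset.prod_pos fun i hi => abs_pos.2 (hf i hi)
  have key : ∏ i ∈ s, f i = (-1 : ℝ) ^ (s.filter fun i => f i < 0).card * ∏ i ∈ s, |f i| := by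
    rw [← Finset.prod_const, ← Finset.prod_filter_mul_prod_filter_not s (fun i => f i < 0) f,
      ← Finset.prod_filter_mul_prod_filter_not s (fun i => f i < 0) (fun i => |f i|)]
    have h1 : ∏ i ∈ s.filter (fun i => f i < 0), f i
        = (∏ _i ∈ s.filter (fun i => f i < 0), (-1 : ℝ)) *
          ∏ i ∈ s.filter (fun i => f i < 0), |f i| := by
      rw [← Finset.prod_mul_distrib]
      exact Finset.prod_congr rfl fun i hi => by
        have := (Finset.mem_filter.1 hi).2; rw [abs_of_neg this]; ring
    have h2 : ∏ i ∈ s.filter (fun i => ¬ f i < 0), f i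
        = ∏ i ∈ s.filter (fun i => ¬ f i < 0), |f i| :=
      Finset.prod_congr rfl fun i hi => by
        have := (Finset.mem_filter.1 hi).2
        rw [abs_of_nonneg (not_lt.1 this)]
    rw [h1, h2]; ring
  rw [key, mul_pos_iff]
  constructor
  · rintro (⟨h1, -⟩ | ⟨-, h2⟩)
    · by_contra h
      rw [(Odd.neg_one_pow (Nat.not_even_iff_odd.1 h) : ((-1:ℝ)) ^ _ = -1)] at h1
      linarith
    · linarith
  · intro h
    exact Or.inl ⟨by rw [h.neg_one_pow]; norm_num, habs⟩

/-- moment curve points -/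
def mom {n d : ℕ} : Fin n → Fin d → ℝ := fun i r => ((i : ℕ) : ℝ) ^ ((r : ℕ) + 1)

lemma liftMat_mom {n d : ℕ} (c : Fin (d + 1) → Fin n) :
    (liftMat fun k => mom (c k)) = (Matrix.vandermonde fun k => ((c k : ℕ) : ℝ))ᵀ := by
  ext i j
  induction i using Fin.cases with
  | zero => simp [liftMat, Matrix.vandermonde, mom]
  | succ r => simp [liftMat, Matrix.vandermonde, mom]

lemma det_liftMat_mom {n d : ℕ} (c : Fin (d + 1) → Fin n) :
    (liftMat fun k => mom (c k)).det
      = ∏ i : Fin (d + 1), ∏ j ∈ Finset.Ioi i, (((c j : ℕ) : ℝ) - ((c i : ℕ) : ℝ)) := by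
  rw [liftMat_mom, Matrix.det_transpose, Matrix.det_vandermonde]

lemma posMat_mom {n d : ℕ} : PosMat (mom : Fin n → Fin d → ℝ) := by
  intro S hS
  rw [show (liftMat fun k => mom (S k)) = liftMat fun k => mom (S k) from rfl, det_liftMat_mom]
  refine Finset.prod_pos fun i _ => Finset.prod_pos fun j hj => ?_
  have : S i < S j := hS (Finset.mem_Ioi.1 hj)
  have : (S i : ℕ) < (S j : ℕ) := this
  simpa using (by exact_mod_cast this : ((S i : ℕ) : ℝ) < ((S j : ℕ) : ℝ))

lemma even_pairs {d : ℕ} (hd : Odd d) (hd2 : Even ((d + 1) / 2)) :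
    Even ((Finset.univ.sigma fun i : Fin (d + 1) => Finset.Ioi i).card) := by
  rw [Finset.card_sigma]
  have h1 : ∀ i : Fin (d + 1), (Finset.Ioi i).card = d - (i : ℕ) := by
    intro i; rw [Fin.card_Ioi]; omega
  simp_rw [h1]
  have h2 : ∑ i : Fin (d + 1), (d - (i : ℕ)) = ∑ i : Fin (d + 1), (i : ℕ) := by
    rw [← Equiv.sum_comp (Fin.revPerm : Equiv.Perm (Fin (d + 1))) (fun i => d - (i : ℕ))]
    refine Finset.sum_congr rfl fun i _ => ?_
    have : ((Fin.revPerm i : Fin (d + 1)) : ℕ) = d - (i : ℕ) := by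
      simp [Fin.revPerm_apply, Fin.val_rev]
    rw [this]; omega
  rw [h2, Fin.sum_univ_eq_sum_range (fun i => i)]
  obtain ⟨a, ha⟩ := hd
  have hdiv : (d + 1) / 2 = a + 1 := by omega
  obtain ⟨b, hb⟩ := hd2
  rw [hdiv] at hb
  have hg := Finset.sum_range_id_mul_two (d + 1)
  have : ∑ i ∈ Finset.range (d + 1), i = (a + 1) * d := by
    have h3 : (∑ i ∈ Finset.range (d + 1), i) * 2 = ((a + 1) * d) * 2 := by
      rw [hg]; subst ha; rw [Nat.add_sub_cancel]; ring
    omega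
  rw [this, hb]
  exact ⟨b * d, by ring⟩

lemma sign_revPerm_eq_one {d : ℕ} (hd : Odd d) (hd2 : Even ((d + 1) / 2)) :
    Equiv.Perm.sign (Fin.revPerm : Equiv.Perm (Fin (d + 1))) = 1 := by
  set v : Fin (d + 1) → ℝ := fun k => ((k : ℕ) : ℝ) with hv
  have h1 : 0 < (Matrix.vandermonde v).det := by
    rw [Matrix.det_vandermonde]
    refine Finset.prod_pos fun i _ => Finset.prod_pos fun j hj => ?_
    have hij : i < j := Finset.mem_Ioi.1 hj
    have : ((i : ℕ) : ℝ) < ((j : ℕ) : ℝ) := by exact_mod_cast hij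
    simpa [hv] using this
  have h2 : (Matrix.vandermonde v).submatrix (Fin.revPerm : Equiv.Perm (Fin (d+1))) id
      = Matrix.vandermonde (fun k => v (Fin.rev k)) := by
    ext i j; simp [Matrix.vandermonde, Matrix.submatrix]
  have h3 : 0 < (Matrix.vandermonde fun k => v (Fin.rev k)).det := by
    rw [Matrix.det_vandermonde, Finset.prod_sigma']
    rw [prod_pos_iff_even]
    · have hall : (Finset.univ.sigma fun i : Fin (d+1) => Finset.Ioi i).filter
          (fun p => v (Fin.rev p.2) - v (Fin.rev p.1) < 0)
          = Finset.univ.sigma fun i : Fin (d+1) => Finset.Ioi i := by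
        refine Finset.filter_true_of_mem fun p hp => ?_
        have hlt : p.1 < p.2 := Finset.mem_Ioi.1 (Finset.mem_sigma.1 hp).2
        have : Fin.rev p.2 < Fin.rev p.1 := Fin.rev_lt_rev.2 hlt
        have hc : ((Fin.rev p.2 : ℕ) : ℝ) < ((Fin.rev p.1 : ℕ) : ℝ) := by
          exact_mod_cast this
        show v p.2.rev - v p.1.rev < 0
        simp only [hv]; linarith
      rw [hall]
      exact even_pairs hd hd2
    · intro p hp
      have hlt : p.1 < p.2 := Finset.mem_Ioi.1 (Finset.mem_sigma.1 hp).2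
      have : Fin.rev p.2 ≠ Fin.rev p.1 := by
        exact fun h => absurd (Fin.rev_injective h) hlt.ne'
      have hc : ((Fin.rev p.2 : ℕ) : ℝ) ≠ ((Fin.rev p.1 : ℕ) : ℝ) := by
        exact fun h => this (Fin.val_injective (by exact_mod_cast h))
      show v p.2.rev - v p.1.rev ≠ 0
      simp only [hv]
      exact sub_ne_zero.2 hc
  have h4 := Matrix.det_permute (Fin.revPerm : Equiv.Perm (Fin (d+1))) (Matrix.vandermonde v)
  rcases Int.units_eq_one_or (Equiv.Perm.sign (Fin.revPerm : Equiv.Perm (Fin (d + 1)))) with h | h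
  · exact h
  · exfalso
    rw [h] at h4
    rw [h2] at h4
    simp at h4
    linarith

section Comb
variable {n : ℕ}

def qq (σ : Equiv.Perm (Fin n)) (a b : Fin n) : ZMod 2 :=
  if a < b ∧ σ b < σ a then 1 else 0

def gg (σ : Equiv.Perm (Fin n)) (a b : Fin n) : ZMod 2 := qq σ a b + qq σ b a

def QQ (σ : Equiv.Perm (Fin n)) (A : Finset (Fin n)) : ZMod 2 :=
  ∑ a ∈ A, ∑ b ∈ A, qq σ a b

def DD (σ : Equiv.Perm (Fin n)) (x : Fin n) (A : Finset (Fin n)) : ZMod 2 :=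
  ∑ c ∈ A, gg σ x c

lemma gg_symm (σ : Equiv.Perm (Fin n)) (a b : Fin n) : gg σ a b = gg σ b a :=
  add_comm _ _

lemma QQ_insert (σ : Equiv.Perm (Fin n)) (x : Fin n) (A : Finset (Fin n)) (hx : x ∉ A) :
    QQ σ (insert x A) = QQ σ A + DD σ x A := by
  unfold QQ DD gg
  rw [Finset.sum_insert hx]
  simp_rw [Finset.sum_insert hx]
  have hxx : qq σ x x = 0 := by simp [qq]
  rw [hxx, Finset.sum_add_distrib, Finset.sum_add_distrib]
  ring

lemma DD_eq {d : ℕ} (σ : Equiv.Perm (Fin n))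
    (HQ : ∀ A : Finset (Fin n), A.card = d + 1 → QQ σ A = 0)
    (A : Finset (Fin n)) (hA : A.card = d) (x y : Fin n) (hx : x ∉ A) (hy : y ∉ A) :
    DD σ x A = DD σ y A := by
  have h1 := HQ (insert x A) (by rw [Finset.card_insert_of_notMem hx, hA])
  have h2 := HQ (insert y A) (by rw [Finset.card_insert_of_notMem hy, hA])
  rw [QQ_insert σ x A hx] at h1
  rw [QQ_insert σ y A hy] at h2
  exact add_left_cancel (h1.trans h2.symm)

lemma gg_quad {d : ℕ} (σ : Equiv.Perm (Fin n))
    (HQ : ∀ A : Finset (Fin n), A.card = d + 1 → QQ σ A = 0)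
    (hd1 : 1 ≤ d) (hn : d + 3 ≤ n) (t u v w : Fin n)
    (htu : t ≠ u) (hvw : v ≠ w) (hvt : v ≠ t) (hvu : v ≠ u) (hwt : w ≠ t) (hwu : w ≠ u) :
    gg σ v t + gg σ w t = gg σ v u + gg σ w u := by
  classical
  have hcard : d - 1 ≤ (Finset.univ \ {t, u, v, w} : Finset (Fin n)).card := by
    have h4 : ({t, u, v, w} : Finset (Fin n)).card ≤ 4 := by
      apply le_trans (Finset.card_insert_le _ _)
      apply Nat.succ_le_succ
      apply le_trans (Finset.card_insert_le _ _)
      apply Nat.succ_le_succ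
      apply le_trans (Finset.card_insert_le _ _)
      apply Nat.succ_le_succ
      simp
    rw [Finset.card_sdiff_of_subset (Finset.subset_univ _), Finset.card_univ, Fintype.card_fin]
    omega
  obtain ⟨B, hBsub, hBcard⟩ := Finset.exists_subset_card_eq hcard
  have hmem : ∀ z ∈ B, z ≠ t ∧ z ≠ u ∧ z ≠ v ∧ z ≠ w := by
    intro z hz
    have := hBsub hz
    simp only [Finset.mem_sdiff, Finset.mem_insert, Finset.mem_singleton] at this
    tauto
  have htB : t ∉ B := fun h => (hmem t h).1 rfl
  have huB : u ∉ B := fun h => (hmem u h).2.1 rfl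
  have hvB : v ∉ B := fun h => (hmem v h).2.2.1 rfl
  have hwB : w ∉ B := fun h => (hmem w h).2.2.2 rfl
  have hcard1 : (insert t B).card = d := by
    rw [Finset.card_insert_of_notMem htB, hBcard]; omega
  have hcard2 : (insert u B).card = d := by
    rw [Finset.card_insert_of_notMem huB, hBcard]; omega
  have hvtB : v ∉ insert t B := by simp [hvt, hvB]
  have hwtB : w ∉ insert t B := by simp [hwt, hwB]
  have hvuB : v ∉ insert u B := by simp [hvu, hvB]
  have hwuB : w ∉ insert u B := by simp [hwu, hwB]
  have e1 := DD_eq σ HQ (insert t B) hcard1 v w hvtB hwtB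
  have e2 := DD_eq σ HQ (insert u B) hcard2 v w hvuB hwuB
  unfold DD at e1 e2
  rw [Finset.sum_insert htB, Finset.sum_insert htB] at e1
  rw [Finset.sum_insert huB, Finset.sum_insert huB] at e2
  have key : ∀ a b c e X Y : ZMod 2, a + X = b + Y → c + X = e + Y → a + b = c + e := by decide
  exact key _ _ _ _ _ _ e1 e2

lemma gg_eq3 {d : ℕ} (σ : Equiv.Perm (Fin n))
    (HQ : ∀ A : Finset (Fin n), A.card = d + 1 → QQ σ A = 0)
    (hd : Odd d) (hn : d + 3 ≤ n) (v w t : Fin n)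
    (hvw : v ≠ w) (hvt : v ≠ t) (hwt : w ≠ t) :
    gg σ v t = gg σ w t := by
  classical
  have hd1 : 1 ≤ d := hd.pos
  have hcard : d ≤ (Finset.univ \ {v, w} : Finset (Fin n)).card := by
    have h2 : ({v, w} : Finset (Fin n)).card ≤ 2 := by
      apply le_trans (Finset.card_insert_le _ _)
      simp
    rw [Finset.card_sdiff_of_subset (Finset.subset_univ _), Finset.card_univ, Fintype.card_fin]
    omega
  obtain ⟨A, hAsub, hAcard⟩ := Finset.exists_subset_card_eq hcard
  have hmem : ∀ z ∈ A, z ≠ v ∧ z ≠ w := by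
    intro z hz
    have := hAsub hz
    simp only [Finset.mem_sdiff, Finset.mem_insert, Finset.mem_singleton] at this
    tauto
  have hvA : v ∉ A := fun h => (hmem v h).1 rfl
  have hwA : w ∉ A := fun h => (hmem w h).2 rfl
  have hDD : DD σ v A = DD σ w A := DD_eq σ HQ A hAcard v w hvA hwA
  have hzero : ∑ u ∈ A, (gg σ v u + gg σ w u) = 0 := by
    rw [Finset.sum_add_distrib]
    show DD σ v A + DD σ w A = 0
    rw [hDD]
    have : ∀ a : ZMod 2, a + a = 0 := by decide
    exact this _
  have hconst : ∀ u ∈ A, gg σ v u + gg σ w u = gg σ v t + gg σ w t := by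
    intro u hu
    by_cases hut : u = t
    · subst hut; rfl
    · exact gg_quad σ HQ hd1 hn u t v w hut hvw (hmem u hu).1.symm hvt (hmem u hu).2.symm hwt
  rw [Finset.sum_congr rfl hconst, Finset.sum_const, hAcard] at hzero
  obtain ⟨a, ha⟩ := hd
  have hsmul : d • (gg σ v t + gg σ w t) = gg σ v t + gg σ w t := by
    rw [nsmul_eq_mul, ← ZMod.natCast_mod, Nat.odd_iff.1 ⟨a, ha⟩]
    simp
  rw [hsmul] at hzero
  have key : ∀ a b : ZMod 2, a + b = 0 → a = b := by decide
  exact key _ _ hzero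

lemma gg_const {d : ℕ} (σ : Equiv.Perm (Fin n))
    (HQ : ∀ A : Finset (Fin n), A.card = d + 1 → QQ σ A = 0)
    (hd : Odd d) (hn : d + 3 ≤ n) (a b c e : Fin n) (hab : a ≠ b) (hce : c ≠ e) :
    gg σ a b = gg σ c e := by
  by_cases hac : a = c
  · subst hac
    by_cases hbe : b = e
    · subst hbe; rfl
    · have := gg_eq3 σ HQ hd hn b e a hbe hab.symm (Ne.symm hce)
      calc gg σ a b = gg σ b a := gg_symm σ a b
        _ = gg σ e a := this
        _ = gg σ a e := gg_symm σ e a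
  · by_cases hcb : c = b
    · subst hcb
      by_cases hae : a = e
      · subst hae
        exact gg_symm σ a c
      · have h1 : gg σ a c = gg σ e c := gg_eq3 σ HQ hd hn a e c hae hab (Ne.symm hce)
        calc gg σ a c = gg σ e c := h1
          _ = gg σ c e := gg_symm σ e c
    · have h1 : gg σ a b = gg σ c b := gg_eq3 σ HQ hd hn a c b hac hab (fun h => hcb h)
      by_cases hbe : b = e
      · subst hbe; exact h1
      · have h2 : gg σ b c = gg σ e c := gg_eq3 σ HQ hd hn b e c hbe (fun h => hcb h.symm) (Ne.symm hce)
        calc gg σ a b = gg σ c b := h1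
          _ = gg σ b c := gg_symm σ c b
          _ = gg σ e c := h2
          _ = gg σ c e := gg_symm σ e c
end Comb


lemma QQ_eq_zero_of_mem {d n : ℕ} (σ : Equiv.Perm (Fin n))
    (hσ : ∀ x : Fin n → Fin d → ℝ, PosMat x → PosMat fun i => x (σ i))
    (A : Finset (Fin n)) (hA : A.card = d + 1) : QQ σ A = 0 := by
  classical
  have hpos : PosMat fun i => (mom : Fin n → Fin d → ℝ) (σ i) := hσ mom posMat_mom
  set S : Fin (d + 1) ↪o Fin n := A.orderEmbOfFin hA with hSdef
  have hSmono : StrictMono ⇑S := S.strictMono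
  have h1 : 0 < (liftMat fun k => mom (σ (S k))).det := hpos ⇑S hSmono
  rw [det_liftMat_mom, Finset.prod_sigma'] at h1
  have hne : ∀ p ∈ Finset.univ.sigma fun i : Fin (d+1) => Finset.Ioi i,
      (((σ (S p.2) : ℕ) : ℝ) - ((σ (S p.1) : ℕ) : ℝ)) ≠ 0 := by
    intro p hp
    have hlt : p.1 < p.2 := Finset.mem_Ioi.1 (Finset.mem_sigma.1 hp).2
    have hne' : σ (S p.2) ≠ σ (S p.1) :=
      fun h => hlt.ne' (hSmono.injective (σ.injective h))
    refine sub_ne_zero.2 fun h => hne' (Fin.val_injective (by exact_mod_cast h))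
  have heven := (prod_pos_iff_even _ _ hne).1 h1
  have himg : A = Finset.image (fun k => S k) Finset.univ := by
    ext a
    simp only [Finset.mem_image, Finset.mem_univ, true_and]
    constructor
    · intro ha
      have : a ∈ Set.range ⇑(A.orderEmbOfFin hA) := by
        rw [Finset.range_orderEmbOfFin]; exact ha
      exact this
    · rintro ⟨k, rfl⟩; exact Finset.orderEmbOfFin_mem A hA k
  have hinj : ∀ x ∈ Finset.univ, ∀ y ∈ (Finset.univ : Finset (Fin (d+1))),
      S x = S y → x = y := fun x _ y _ h => hSmono.injective h
  unfold QQ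
  rw [himg, Finset.sum_image hinj]
  have hinner : ∀ k : Fin (d+1),
      ∑ b ∈ Finset.image (fun k => S k) Finset.univ, qq σ (S k) b
        = ∑ l : Fin (d+1), qq σ (S k) (S l) := fun k => Finset.sum_image hinj
  simp_rw [hinner]
  have hstep : ∀ k : Fin (d+1), ∑ l : Fin (d+1), qq σ (S k) (S l)
      = ∑ l ∈ Finset.Ioi k, (if σ (S l) < σ (S k) then (1 : ZMod 2) else 0) := by
    intro k
    have hzero : ∀ l ∈ (Finset.univ : Finset (Fin (d+1))), l ∉ Finset.Ioi k →
        qq σ (S k) (S l) = 0 := by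
      intro l _ hl
      have hnkl : ¬ k < l := fun h => hl (Finset.mem_Ioi.2 h)
      have hnS : ¬ S k < S l := fun h => hnkl (hSmono.lt_iff_lt.1 h)
      simp [qq, hnS]
    rw [← Finset.sum_subset (Finset.subset_univ (Finset.Ioi k)) hzero]
    refine Finset.sum_congr rfl fun l hl => ?_
    have hkl : k < l := Finset.mem_Ioi.1 hl
    simp [qq, hSmono hkl]
  simp_rw [hstep]
  rw [Finset.sum_sigma']
  have hfilter : (Finset.univ.sigma fun i : Fin (d+1) => Finset.Ioi i).filter
        (fun p => σ (S p.2) < σ (S p.1))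
      = (Finset.univ.sigma fun i : Fin (d+1) => Finset.Ioi i).filter
        (fun p => (((σ (S p.2) : ℕ) : ℝ) - ((σ (S p.1) : ℕ) : ℝ)) < 0) := by
    refine Finset.filter_congr fun p _ => ?_
    rw [sub_neg]
    constructor
    · intro h; exact_mod_cast (show ((σ (S p.2)) : ℕ) < ((σ (S p.1)) : ℕ) from h)
    · intro h; exact (show ((σ (S p.2)) : ℕ) < ((σ (S p.1)) : ℕ) by exact_mod_cast h)
  rw [Finset.sum_boole, hfilter]
  rw [ZMod.natCast_eq_zero_iff]
  exact even_iff_two_dvd.1 heven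

lemma perm_eq_one_of_strictMono {n : ℕ} (σ : Equiv.Perm (Fin n)) (h : StrictMono ⇑σ) :
    σ = 1 := by
  have hr : Set.range ⇑σ = Set.range (id : Fin n → Fin n) := by
    rw [Set.range_id, Set.range_eq_univ.2 σ.surjective]
  haveI : WellFoundedLT (Fin n) := inferInstance
  have hfe : ⇑σ = id := (h.range_inj strictMono_id).1 hr
  exact Equiv.ext fun x => congrFun hfe x

lemma perm_eq_rev_of_strictAnti {n : ℕ} (σ : Equiv.Perm (Fin n)) (h : StrictAnti ⇑σ) :
    σ = Fin.revPerm := by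
  have hm : StrictMono fun i : Fin n => σ (Fin.rev i) := by
    intro i j hij
    have : Fin.rev j < Fin.rev i := by rw [Fin.rev_lt_rev]; exact hij
    exact h this
  have hr : Set.range (fun i : Fin n => σ (Fin.rev i)) = Set.range (id : Fin n → Fin n) := by
    rw [Set.range_id, Set.range_eq_univ.2 (fun y => ⟨Fin.rev (σ.symm y), by simp⟩)]
  haveI : WellFoundedLT (Fin n) := inferInstance
  have hfe : (fun i : Fin n => σ (Fin.rev i)) = id := (hm.range_inj strictMono_id).1 hr
  refine Equiv.ext fun j => ?_
  have := congrFun hfe (Fin.rev j)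
  simp only [Fin.rev_rev, id_eq] at this
  rw [this]
  simp

lemma rev_preserves {d n : ℕ} (hd : Odd d) (hd2 : Even ((d + 1) / 2))
    (x : Fin n → Fin d → ℝ) (hx : PosMat x) : PosMat fun i => x (Fin.revPerm i) := by
  intro S hS
  show 0 < (liftMat fun k => x (Fin.revPerm (S k))).det
  have hS' : StrictMono fun k : Fin (d + 1) => Fin.rev (S (Fin.rev k)) := by
    intro k l hkl
    show Fin.rev (S (Fin.rev k)) < Fin.rev (S (Fin.rev l))
    rw [Fin.rev_lt_rev]
    apply hS
    rw [Fin.rev_lt_rev]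
    exact hkl
  have hmat : (liftMat fun k => x (Fin.revPerm (S k)))
      = (liftMat fun k => x (Fin.rev (S (Fin.rev k)))).submatrix id
          ⇑(Fin.revPerm : Equiv.Perm (Fin (d + 1))) := by
    ext i j
    simp [liftMat, Matrix.submatrix_apply, Fin.rev_rev]
  rw [hmat, Matrix.det_permute', sign_revPerm_eq_one hd hd2]
  simpa using hx _ hS'


/-- for `d` odd with `(d+1)/2` even and `n ≥ d+3`, the stabilizer `C_n^d`
of positive matrices under column permutation is the order-2 group generated by the
order-reversing permutation `i ↦ n + 1 − i` (i.e. `Fin.revPerm`). -/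
theorem stabilizer_odd_d_even_half_reversal {d n : ℕ} (hd : Odd d) (hd2 : Even ((d + 1) / 2))
    (hn : d + 3 ≤ n) :
    {σ : Equiv.Perm (Fin n) |
        ∀ x : Fin n → Fin d → ℝ, PosMat x → PosMat fun i => x (σ i)} =
      {1, Fin.revPerm} := by
  classical
  have hd1 : 1 ≤ d := hd.pos
  have hn2 : 2 ≤ n := by omega
  ext σ
  simp only [Set.mem_setOf_eq, Set.mem_insert_iff, Set.mem_singleton_iff]
  constructor
  · intro hσ
    have HQ : ∀ A : Finset (Fin n), A.card = d + 1 → QQ σ A = 0 :=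
      fun A hA => QQ_eq_zero_of_mem σ hσ A hA
    set x0 : Fin n := ⟨0, by omega⟩ with hx0
    set x1 : Fin n := ⟨1, by omega⟩ with hx1
    have h01 : x0 ≠ x1 := by simp [hx0, hx1, Fin.ext_iff]
    have hgconst : ∀ a b : Fin n, a ≠ b → gg σ a b = gg σ x0 x1 :=
      fun a b hab => gg_const σ HQ hd hn a b x0 x1 hab h01
    rcases (by decide : ∀ z : ZMod 2, z = 0 ∨ z = 1) (gg σ x0 x1) with h0 | h1
    · left
      apply perm_eq_one_of_strictMono
      intro i j hij
      have hgg : gg σ i j = 0 := by rw [hgconst i j hij.ne]; exact h0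
      have hq2 : qq σ j i = 0 := by simp [qq, hij.asymm]
      have hq1 : qq σ i j = 0 := by
        have h' : qq σ i j + qq σ j i = 0 := hgg
        rw [hq2, add_zero] at h'
        exact h'
      by_contra hle
      push_neg at hle
      have hne : σ j ≠ σ i := fun h => hij.ne (σ.injective h.symm)
      have hlt : σ j < σ i := lt_of_le_of_ne hle hne
      have : qq σ i j = 1 := by simp [qq, hij, hlt]
      rw [hq1] at this
      exact absurd this (by decide)
    · right
      apply perm_eq_rev_of_strictAnti
      intro i j hij
      have hgg : gg σ i j = 1 := by rw [hgconst i j hij.ne]; exact h1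
      have hq2 : qq σ j i = 0 := by simp [qq, hij.asymm]
      have hq1 : qq σ i j = 1 := by
        have h' : qq σ i j + qq σ j i = 1 := hgg
        rw [hq2, add_zero] at h'
        exact h'
      by_contra hlt
      have : qq σ i j = 0 := by simp [qq, hlt]
      rw [this] at hq1
      exact absurd hq1 (by decide)
  · rintro (rfl | rfl)
    · intro x hx
      simpa using hx
    · intro x hx
      exact rev_preserves hd hd2 x hx
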